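/- (Binomial expansion form) Suppose a₁² − b₀²p = t^{2r}. Then for all n ≥ 0, aₙ = ∑_{k=0}^{⌊n/2⌋} C(n, 2k)·(a₁² − t^{2r})^k · a₁^{n−2k}, and bₙ = b₀·∑_{k=0}^{⌊n/2⌋} C(n+1, 2k+1)·(a₁² − t^{2r})^k · a₁^{n−2k}. -/

import Mathlib

open Polynomial Finset

private lemma sum_range_two_mul' {β : Type*} [AddCommMonoid β] (g : ℕ → β) (n : ℕ) :
    ∑ j ∈ range (2 * n), g j = ∑ k ∈ range n, (g (2 * k) + g (2 * k + 1)) := by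
  induction n with
  | zero => simp
  | succ n ih =>
      have h : 2 * (n + 1) = 2 * n + 1 + 1 := by ring
      rw [h, sum_range_succ, sum_range_succ, ih, sum_range_succ, add_assoc]

private lemma root_sq (p : Polynomial ℂ) :
    (AdjoinRoot.root ((X : Polynomial (Polynomial ℂ)) ^ 2 - C p)) ^ 2 =
      AdjoinRoot.of ((X : Polynomial (Polynomial ℂ)) ^ 2 - C p) p := by
  have h := AdjoinRoot.mk_self (f := ((X : Polynomial (Polynomial ℂ)) ^ 2 - C p))
  rw [map_sub, map_pow, AdjoinRoot.mk_X, AdjoinRoot.mk_C, sub_eq_zero] at h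
  exact h

private lemma pow_expand (p a1 b0 : Polynomial ℂ) (m : ℕ) :
    (AdjoinRoot.of ((X : Polynomial (Polynomial ℂ)) ^ 2 - C p) a1 +
        AdjoinRoot.of ((X : Polynomial (Polynomial ℂ)) ^ 2 - C p) b0 *
          AdjoinRoot.root ((X : Polynomial (Polynomial ℂ)) ^ 2 - C p)) ^ (m + 1) =
      AdjoinRoot.of ((X : Polynomial (Polynomial ℂ)) ^ 2 - C p)
        (∑ k ∈ range ((m + 1) / 2 + 1),
          ((m + 1).choose (2 * k) : Polynomial ℂ) * (b0 ^ 2 * p) ^ k * a1 ^ (m + 1 - 2 * k)) +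
      AdjoinRoot.of ((X : Polynomial (Polynomial ℂ)) ^ 2 - C p)
        (b0 * ∑ k ∈ range (m / 2 + 1),
          ((m + 1).choose (2 * k + 1) : Polynomial ℂ) * (b0 ^ 2 * p) ^ k * a1 ^ (m - 2 * k)) *
        AdjoinRoot.root ((X : Polynomial (Polynomial ℂ)) ^ 2 - C p) := by
  set φ := AdjoinRoot.of ((X : Polynomial (Polynomial ℂ)) ^ 2 - C p) with hφ
  set α := AdjoinRoot.root ((X : Polynomial (Polynomial ℂ)) ^ 2 - C p) with hα
  have hα2 : α ^ 2 = φ p := root_sq p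
  have hαk : ∀ k : ℕ, α ^ (2 * k) = φ p ^ k := fun k => by rw [pow_mul, hα2]
  calc (φ a1 + φ b0 * α) ^ (m + 1)
      = ∑ j ∈ range (m + 1 + 1), (φ b0 * α) ^ j * φ a1 ^ (m + 1 - j) *
          ((m + 1).choose j) := by rw [add_comm (φ a1), add_pow]
    _ = ∑ j ∈ range (2 * (m + 2)), (φ b0 * α) ^ j * φ a1 ^ (m + 1 - j) *
          ((m + 1).choose j) := by
        apply Finset.sum_subset
        · intro j hj; simp only [mem_range] at *; omega
        · intro j _ hj
          simp only [mem_range, not_lt] at hj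
          rw [Nat.choose_eq_zero_of_lt (by omega)]
          simp
    _ = ∑ k ∈ range (m + 2),
          ((φ b0 * α) ^ (2 * k) * φ a1 ^ (m + 1 - 2 * k) * ((m + 1).choose (2 * k)) +
           (φ b0 * α) ^ (2 * k + 1) * φ a1 ^ (m + 1 - (2 * k + 1)) *
             ((m + 1).choose (2 * k + 1))) := sum_range_two_mul' _ _
    _ = (∑ k ∈ range (m + 2),
            φ (((m + 1).choose (2 * k) : Polynomial ℂ) * (b0 ^ 2 * p) ^ k * a1 ^ (m + 1 - 2 * k)))
        + (∑ k ∈ range (m + 2),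
            φ (b0 * (((m + 1).choose (2 * k + 1) : Polynomial ℂ) * (b0 ^ 2 * p) ^ k *
              a1 ^ (m - 2 * k)))) * α := by
        rw [Finset.sum_add_distrib, Finset.sum_mul]
        refine congrArg₂ (· + ·) ?_ ?_
        · apply Finset.sum_congr rfl
          intro k _
          rw [mul_pow, hαk k]
          simp only [map_mul, map_pow, map_natCast]
          ring
        · apply Finset.sum_congr rfl
          intro k _
          have e : m + 1 - (2 * k + 1) = m - 2 * k := by omega
          have h1 : (φ b0 * α) ^ (2 * k + 1) = φ b0 ^ (2 * k) * φ p ^ k * (φ b0 * α) := by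
            simp only [pow_succ, mul_pow, hαk]
          rw [e, h1]
          simp only [map_mul, map_pow, map_natCast]
          ring
    _ = φ (∑ k ∈ range ((m + 1) / 2 + 1),
            ((m + 1).choose (2 * k) : Polynomial ℂ) * (b0 ^ 2 * p) ^ k * a1 ^ (m + 1 - 2 * k))
        + φ (b0 * ∑ k ∈ range (m / 2 + 1),
            ((m + 1).choose (2 * k + 1) : Polynomial ℂ) * (b0 ^ 2 * p) ^ k * a1 ^ (m - 2 * k))
          * α := by
        have hS : ∑ k ∈ range ((m + 1) / 2 + 1),
            ((m + 1).choose (2 * k) : Polynomial ℂ) * (b0 ^ 2 * p) ^ k * a1 ^ (m + 1 - 2 * k)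
            = ∑ k ∈ range (m + 2),
            ((m + 1).choose (2 * k) : Polynomial ℂ) * (b0 ^ 2 * p) ^ k * a1 ^ (m + 1 - 2 * k) := by
          apply Finset.sum_subset
          · intro k hk; simp only [mem_range] at *; omega
          · intro k _ hk
            simp only [mem_range, not_lt] at hk
            rw [Nat.choose_eq_zero_of_lt (by omega)]
            simp
        have hT : ∑ k ∈ range (m / 2 + 1),
            ((m + 1).choose (2 * k + 1) : Polynomial ℂ) * (b0 ^ 2 * p) ^ k * a1 ^ (m - 2 * k)
            = ∑ k ∈ range (m + 2),
            ((m + 1).choose (2 * k + 1) : Polynomial ℂ) * (b0 ^ 2 * p) ^ k * a1 ^ (m - 2 * k) := by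
          apply Finset.sum_subset
          · intro k hk; simp only [mem_range] at *; omega
          · intro k _ hk
            simp only [mem_range, not_lt] at hk
            rw [Nat.choose_eq_zero_of_lt (by omega)]
            simp
        rw [← map_sum, ← map_sum, hS, hT, Finset.mul_sum]

private lemma adjoin_inj (p x y x' y' : Polynomial ℂ)
    (h : AdjoinRoot.of ((X : Polynomial (Polynomial ℂ)) ^ 2 - C p) x +
          AdjoinRoot.of ((X : Polynomial (Polynomial ℂ)) ^ 2 - C p) y *
            AdjoinRoot.root ((X : Polynomial (Polynomial ℂ)) ^ 2 - C p) =
        AdjoinRoot.of ((X : Polynomial (Polynomial ℂ)) ^ 2 - C p) x' +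
          AdjoinRoot.of ((X : Polynomial (Polynomial ℂ)) ^ 2 - C p) y' *
            AdjoinRoot.root ((X : Polynomial (Polynomial ℂ)) ^ 2 - C p)) :
    x = x' ∧ y = y' := by
  have hm : AdjoinRoot.mk ((X : Polynomial (Polynomial ℂ)) ^ 2 - C p) (C x + C y * X) =
      AdjoinRoot.mk ((X : Polynomial (Polynomial ℂ)) ^ 2 - C p) (C x' + C y' * X) := by
    simpa [map_add, map_mul, AdjoinRoot.mk_C, AdjoinRoot.mk_X] using h
  rw [AdjoinRoot.mk_eq_mk] at hm
  have hd : ((C x + C y * X) - (C x' + C y' * X)).degree <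
      ((X : Polynomial (Polynomial ℂ)) ^ 2 - C p).degree := by
    rw [degree_X_pow_sub_C (by norm_num) p]
    have e : (C x + C y * X) - (C x' + C y' * X) = C (y - y') * X + C (x - x') := by
      rw [C_sub, C_sub]; ring
    rw [e]
    exact lt_of_le_of_lt degree_linear_le (by norm_num)
  have h0 := Polynomial.eq_zero_of_dvd_of_degree_lt hm hd
  have e : (C x + C y * X) - (C x' + C y' * X) = C (y - y') * X + C (x - x') := by
    rw [C_sub, C_sub]; ring
  rw [e] at h0
  constructor
  · have := congrArg (fun q => Polynomial.coeff q 0) h0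
    simpa [sub_eq_zero] using this
  · have := congrArg (fun q => Polynomial.coeff q 1) h0
    simpa [coeff_C, sub_eq_zero] using this

theorem binomial_expansion (p : Polynomial ℂ) (a b : ℕ → Polynomial ℂ) (r : ℕ)
    (ha0 : a 0 = 1)
    (hdef : ∀ n : ℕ,
      AdjoinRoot.of ((X : Polynomial (Polynomial ℂ)) ^ 2 - C p) (a (n + 1)) +
        AdjoinRoot.of (X ^ 2 - C p) (b n) * AdjoinRoot.root (X ^ 2 - C p) =
      (AdjoinRoot.of (X ^ 2 - C p) (a 1) +
        AdjoinRoot.of (X ^ 2 - C p) (b 0) * AdjoinRoot.root (X ^ 2 - C p)) ^ (n + 1))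
    (hr : a 1 ^ 2 - b 0 ^ 2 * p = X ^ (2 * r)) :
    ∀ n : ℕ,
      a n = ∑ k ∈ Finset.range (n / 2 + 1),
          (n.choose (2 * k) : Polynomial ℂ) * (a 1 ^ 2 - X ^ (2 * r)) ^ k * a 1 ^ (n - 2 * k) ∧
      b n = b 0 * ∑ k ∈ Finset.range (n / 2 + 1),
          ((n + 1).choose (2 * k + 1) : Polynomial ℂ) * (a 1 ^ 2 - X ^ (2 * r)) ^ k *
            a 1 ^ (n - 2 * k) := by
  have hq : b 0 ^ 2 * p = a 1 ^ 2 - X ^ (2 * r) := by linear_combination -hr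
  intro n
  constructor
  · cases n with
    | zero => simp [ha0]
    | succ s =>
        have h := (hdef s).trans (pow_expand p (a 1) (b 0) s)
        rw [← hq]
        exact (adjoin_inj p _ _ _ _ h).1
  · have h := (hdef n).trans (pow_expand p (a 1) (b 0) n)
    rw [← hq]
    exact (adjoin_inj p _ _ _ _ h).2
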